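/- (Grothendieck's Theorem) Let X be a countably compact completely regular Hausdorff space and A ⊆ Cp(X). Then the closure of A in Cp(X) is compact if and only if A is countably compact in Cp(X). -/

import Mathlib

open Set Filter Topology

def IsLimitPointOf {Z : Type*} [TopologicalSpace Z] (x : Z) (S : Set Z) : Prop :=
  ∀ U : Set Z, IsOpen U → x ∈ U → (S ∩ U).Infinite

def CountablyCompactIn {Z : Type*} [TopologicalSpace Z] (A B : Set Z) : Prop :=
  ∀ S ⊆ A, S.Infinite → ∃ x ∈ B, IsLimitPointOf x S

def IsGSpace (Y : Type*) [TopologicalSpace Y] : Prop :=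
  ∀ A : Set Y, CountablyCompactIn A Set.univ → IsCompact (closure A)

def IsHereditaryGSpace (Y : Type*) [TopologicalSpace Y] : Prop :=
  ∀ B : Set Y, IsGSpace B

def Cp (X : Type*) [TopologicalSpace X] : Type _ := {f : X → ℝ // Continuous f}

instance (X : Type*) [TopologicalSpace X] : TopologicalSpace (Cp X) :=
  inferInstanceAs (TopologicalSpace {f : X → ℝ // Continuous f})

def CpI (X : Type*) [TopologicalSpace X] : Type _ := {f : X → unitInterval // Continuous f}

instance (X : Type*) [TopologicalSpace X] : TopologicalSpace (CpI X) :=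
  inferInstanceAs (TopologicalSpace {f : X → unitInterval // Continuous f})

def CountablyTight (X : Type*) [TopologicalSpace X] : Prop :=
  ∀ (A : Set X) (x : X), x ∈ closure A → ∃ B ⊆ A, B.Countable ∧ x ∈ closure B

def CountablyCompactSpace' (Y : Type*) [TopologicalSpace Y] : Prop :=
  ∀ S : Set Y, S.Infinite → ∃ x : Y, IsLimitPointOf x S

def DULC {X : Type*} [TopologicalSpace X] (A : Set (CpI X)) : Prop :=
  ∀ (f : ℕ → CpI X), (∀ n, f n ∈ A) → ∀ (x : ℕ → X) (𝒰 𝒱 : Ultrafilter ℕ),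
    (∃ y : X, Filter.Tendsto x (𝒱 : Filter ℕ) (nhds y)) →
    ∀ (g h : ℕ → unitInterval) (u v : unitInterval),
      (∀ n, Filter.Tendsto (fun m => (f n).1 (x m)) (𝒱 : Filter ℕ) (nhds (g n))) →
      Filter.Tendsto g (𝒰 : Filter ℕ) (nhds u) →
      (∀ m, Filter.Tendsto (fun n => (f n).1 (x m)) (𝒰 : Filter ℕ) (nhds (h m))) →
      Filter.Tendsto h (𝒱 : Filter ℕ) (nhds v) →
      u = v

def DLC {X : Type*} [TopologicalSpace X] (A : Set (CpI X)) : Prop :=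
  ∀ (f : ℕ → CpI X), (∀ n, f n ∈ A) → ∀ (x : ℕ → X),
    ∀ (g h : ℕ → unitInterval) (u v : unitInterval),
      (∀ n, Filter.Tendsto (fun m => (f n).1 (x m)) Filter.atTop (nhds (g n))) →
      Filter.Tendsto g Filter.atTop (nhds u) →
      (∀ m, Filter.Tendsto (fun n => (f n).1 (x m)) Filter.atTop (nhds (h m))) →
      Filter.Tendsto h Filter.atTop (nhds v) →
      u = v


private lemma isOpen_absLt {Y : Type*} [TopologicalSpace Y] {F : Y → ℝ} (hF : Continuous F)
    (c δ : ℝ) : IsOpen {z | |F z - c| < δ} := by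
  have : {z | |F z - c| < δ} = F ⁻¹' Metric.ball c δ := by
    ext z; simp [Metric.mem_ball, Real.dist_eq]
  rw [this]
  exact hF.isOpen_preimage _ Metric.isOpen_ball

private lemma cpEval {X : Type*} [TopologicalSpace X] (x : X) :
    Continuous (fun f : Cp X => f.1 x) :=
  (continuous_apply x).comp continuous_subtype_val

private lemma exists_ge_of_infinite {Y : Type*} (F : ℕ → Y) (U : Set Y)
    (h : (Set.range F ∩ U).Infinite) (N : ℕ) : ∃ n, N ≤ n ∧ F n ∈ U := by
  obtain ⟨φ, hφ, hni⟩ := (h.diff ((Set.finite_Iio N).image F)).nonempty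
  obtain ⟨⟨n, rfl⟩, hU⟩ := hφ
  refine ⟨n, ?_, hU⟩
  by_contra hn
  exact hni ⟨n, not_le.mp hn, rfl⟩

private lemma exists_infinite_fiber_of_range_finite {Y : Type*} {F : ℕ → Y}
    (h : (Set.range F).Finite) : ∃ a, {n | F n = a}.Infinite := by
  haveI := h.to_subtype
  obtain ⟨y, hy⟩ := Finite.exists_infinite_fiber (Set.rangeFactorization F)
  refine ⟨y.1, ?_⟩
  rw [← Set.infinite_coe_iff]
  have : {n | F n = y.1} = Set.rangeFactorization F ⁻¹' {y} := by
    ext n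
    simp [Set.rangeFactorization, Subtype.ext_iff]
  rw [this]
  exact hy

private lemma approx_of_mem_closure {X : Type*} [TopologicalSpace X] {A : Set (Cp X)} {g : X → ℝ}
    (hg : g ∈ closure (Subtype.val '' A)) (t : Finset X) {δ : ℝ} (hδ : 0 < δ) :
    ∃ f ∈ A, ∀ x ∈ t, |f.1 x - g x| < δ := by
  have hU : IsOpen {φ : X → ℝ | ∀ x ∈ t, |φ x - g x| < δ} := by
    have : {φ : X → ℝ | ∀ x ∈ t, |φ x - g x| < δ}
        = ⋂ x ∈ t, {φ : X → ℝ | |φ x - g x| < δ} := by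
      ext φ; simp
    rw [this]
    exact isOpen_biInter_finset fun x _ => isOpen_absLt (continuous_apply x) _ _
  have hgU : g ∈ {φ : X → ℝ | ∀ x ∈ t, |φ x - g x| < δ} := by
    intro x _
    simpa using hδ
  obtain ⟨φ, hφU, hφA⟩ := _root_.mem_closure_iff.1 hg _ hU hgU
  obtain ⟨f, hfA, rfl⟩ := hφA
  exact ⟨f, hfA, hφU⟩

private lemma continuous_of_mem_closure {X : Type*} [TopologicalSpace X]
    (hX : CountablyCompactSpace' X) {A : Set (Cp X)}
    (hcc : CountablyCompactIn A (Set.univ : Set (Cp X)))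
    {g : X → ℝ} (hg : g ∈ closure (Subtype.val '' A)) : Continuous g := by
  classical
  by_contra hgc
  rw [continuous_iff_continuousAt] at hgc
  push_neg at hgc
  obtain ⟨x₀, hx₀⟩ := hgc
  have hdis : ∃ ε > 0, ∀ U : Set X, IsOpen U → x₀ ∈ U → ∃ x ∈ U, ε ≤ |g x - g x₀| := by
    by_contra hcon
    push_neg at hcon
    apply hx₀
    rw [ContinuousAt, Metric.tendsto_nhds]
    intro ε hε
    obtain ⟨U, hUo, hx₀U, hU⟩ := hcon ε hε
    exact Filter.eventually_of_mem (hUo.mem_nhds hx₀U)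
      (fun x hx => by rw [Real.dist_eq]; exact hU x hx)
  obtain ⟨ε, hε, hdis⟩ := hdis
  -- construct the interleaved sequences via `exists_seq_of_forall_finset_exists`
  set P : ℕ × Cp X × X → Prop := fun t => t.2.1 ∈ A ∧ ε ≤ |g t.2.2 - g x₀| ∧ 1 ≤ t.1 with hP_def
  set r : ℕ × Cp X × X → ℕ × Cp X × X → Prop := fun a b =>
    a.1 < b.1 ∧ |(b.2.1).1 a.2.2 - g a.2.2| < 1 / (b.1 : ℝ) ∧
      |(b.2.1).1 x₀ - g x₀| < 1 / (b.1 : ℝ) ∧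
      |(a.2.1).1 b.2.2 - (a.2.1).1 x₀| < 1 / (b.1 : ℝ) with hr_def
  have hstep : ∀ s : Finset (ℕ × Cp X × X), (∀ x ∈ s, P x) → ∃ y, P y ∧ ∀ x ∈ s, r x y := by
    intro s _
    set k' : ℕ := (s.sup fun t => t.1) + 1 with hk'
    have hk'pos : (0 : ℝ) < 1 / (k' : ℝ) := by positivity
    obtain ⟨f', hf'A, hf'⟩ :=
      approx_of_mem_closure hg (insert x₀ (s.image fun t => t.2.2)) hk'pos
    set V : Set X := {x | |f'.1 x - f'.1 x₀| < 1 / (k' : ℝ)} ∩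
        ⋂ t ∈ s, {x | |(t.2.1).1 x - (t.2.1).1 x₀| < 1 / (k' : ℝ)} with hV
    have hVo : IsOpen V :=
      (isOpen_absLt f'.2 _ _).inter
        (isOpen_biInter_finset fun t _ => isOpen_absLt (t.2.1).2 _ _)
    have hx₀V : x₀ ∈ V := by
      constructor
      · simpa using hk'pos
      · exact Set.mem_iInter₂.2 fun t _ => by simpa using hk'pos
    obtain ⟨x', hx'V, hx'⟩ := hdis V hVo hx₀V
    refine ⟨(k', f', x'), ⟨hf'A, hx', Nat.succ_le_succ (Nat.zero_le _)⟩, ?_⟩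
    intro t hts
    refine ⟨Nat.lt_succ_of_le (Finset.le_sup (f := fun t => t.1) hts), ?_, ?_, ?_⟩
    · exact hf' _ (Finset.mem_insert_of_mem (Finset.mem_image_of_mem _ hts))
    · exact hf' _ (Finset.mem_insert_self _ _)
    · exact Set.mem_iInter₂.1 hx'V.2 t hts
  obtain ⟨sq, hP, hr⟩ := exists_seq_of_forall_finset_exists P r hstep
  set k : ℕ → ℕ := fun n => (sq n).1 with hk_def
  set F : ℕ → Cp X := fun n => (sq n).2.1 with hF_def
  set y : ℕ → X := fun n => (sq n).2.2 with hy_def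
  have hkmono : StrictMono k := fun m n h => (hr m n h).1
  have hsmall : ∀ δ : ℝ, 0 < δ → ∃ N, 1 ≤ N ∧ ∀ n, N ≤ n → 1 / (k n : ℝ) < δ := by
    intro δ hδ
    obtain ⟨N, hN⟩ := exists_nat_one_div_lt hδ
    refine ⟨N + 1, Nat.succ_le_succ (Nat.zero_le _), fun n hn => ?_⟩
    have h1 : (N + 1 : ℝ) ≤ (k n : ℝ) := by
      exact_mod_cast hn.trans (hkmono.le_apply)
    calc 1 / (k n : ℝ) ≤ 1 / (N + 1 : ℝ) := by
          apply one_div_le_one_div_of_le (by positivity) h1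
      _ < δ := hN
  have hFA : ∀ n, F n ∈ A := fun n => (hP n).1
  have hεy : ∀ n, ε ≤ |g (y n) - g x₀| := fun n => (hP n).2.1
  have hr1 : ∀ m n, m < n → |(F n).1 (y m) - g (y m)| < 1 / (k n : ℝ) :=
    fun m n h => (hr m n h).2.1
  have hr2 : ∀ m n, m < n → |(F n).1 x₀ - g x₀| < 1 / (k n : ℝ) :=
    fun m n h => (hr m n h).2.2.1
  have hr3 : ∀ m n, m < n → |(F m).1 (y n) - (F m).1 x₀| < 1 / (k n : ℝ) :=
    fun m n h => (hr m n h).2.2.2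
  -- extract the limiting continuous function h
  have hH : ∃ h : Cp X, (∀ m, h.1 (y m) = g (y m)) ∧ h.1 x₀ = g x₀ ∧
      ∀ δ > (0:ℝ), ∀ p q : X, ∃ n, |(F n).1 p - h.1 p| < δ ∧ |(F n).1 q - h.1 q| < δ := by
    by_cases hfin : (Set.range F).Finite
    · obtain ⟨f₀, hf₀⟩ := exists_infinite_fiber_of_range_finite hfin
      refine ⟨f₀, ?_, ?_, ?_⟩
      · intro m
        apply eq_of_forall_dist_le
        intro δ hδ
        rw [Real.dist_eq]
        obtain ⟨N, hN1, hN⟩ := hsmall δ hδ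
        obtain ⟨n, hn_mem, hn_gt⟩ := hf₀.exists_gt (max N m)
        have h1 := hr1 m n ((le_max_right N m).trans_lt hn_gt)
        rw [hn_mem] at h1
        exact (h1.trans (hN n (((le_max_left N m).trans hn_gt.le)))).le
      · apply eq_of_forall_dist_le
        intro δ hδ
        rw [Real.dist_eq]
        obtain ⟨N, hN1, hN⟩ := hsmall δ hδ
        obtain ⟨n, hn_mem, hn_gt⟩ := hf₀.exists_gt N
        have h1 := hr2 0 n (lt_of_lt_of_le (Nat.lt_of_lt_of_le (Nat.lt_of_lt_of_le Nat.zero_lt_one hN1) hn_gt.le) le_rfl)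
        rw [hn_mem] at h1
        exact (h1.trans (hN n hn_gt.le)).le
      · intro δ hδ p q
        obtain ⟨n, hn_mem, _⟩ := hf₀.exists_gt 0
        refine ⟨n, ?_, ?_⟩ <;> rw [hn_mem] <;> simpa using hδ
    · have hSA : Set.range F ⊆ A := by rintro _ ⟨n, rfl⟩; exact hFA n
      obtain ⟨h, -, hlim⟩ := hcc _ hSA hfin
      refine ⟨h, ?_, ?_, ?_⟩
      · intro m
        apply eq_of_forall_dist_le
        intro δ hδ
        rw [Real.dist_eq]
        obtain ⟨N, hN1, hN⟩ := hsmall (δ / 2) (half_pos hδ)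
        set U : Set (Cp X) := {φ | |φ.1 (y m) - h.1 (y m)| < δ / 2} with hU
        have hUo : IsOpen U := isOpen_absLt (cpEval (y m)) _ _
        have hhU : h ∈ U := by simpa [hU] using half_pos hδ
        obtain ⟨n, hnN, hnU⟩ :=
          exists_ge_of_infinite F U (hlim U hUo hhU) (max N (m + 1))
        have h1 : |(F n).1 (y m) - h.1 (y m)| < δ / 2 := hnU
        have h2 : |(F n).1 (y m) - g (y m)| < δ / 2 :=
          (hr1 m n ((Nat.lt_succ_self m).trans_le ((le_max_right N (m+1)).trans hnN))).trans
            (hN n ((le_max_left N (m+1)).trans hnN))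
        have h3 : |h.1 (y m) - g (y m)| ≤
            |h.1 (y m) - (F n).1 (y m)| + |(F n).1 (y m) - g (y m)| := abs_sub_le _ _ _
        rw [abs_sub_comm] at h1
        linarith
      · apply eq_of_forall_dist_le
        intro δ hδ
        rw [Real.dist_eq]
        obtain ⟨N, hN1, hN⟩ := hsmall (δ / 2) (half_pos hδ)
        set U : Set (Cp X) := {φ | |φ.1 x₀ - h.1 x₀| < δ / 2} with hU
        have hUo : IsOpen U := isOpen_absLt (cpEval x₀) _ _
        have hhU : h ∈ U := by simpa [hU] using half_pos hδ
        obtain ⟨n, hnN, hnU⟩ := exists_ge_of_infinite F U (hlim U hUo hhU) (max N 1)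
        have h1 : |(F n).1 x₀ - h.1 x₀| < δ / 2 := hnU
        have h2 : |(F n).1 x₀ - g x₀| < δ / 2 :=
          (hr2 0 n (Nat.lt_of_lt_of_le Nat.zero_lt_one ((le_max_right N 1).trans hnN))).trans
            (hN n ((le_max_left N 1).trans hnN))
        have h3 : |h.1 x₀ - g x₀| ≤ |h.1 x₀ - (F n).1 x₀| + |(F n).1 x₀ - g x₀| :=
          abs_sub_le _ _ _
        rw [abs_sub_comm] at h1
        linarith
      · intro δ hδ p q
        set U : Set (Cp X) :=
          {φ | |φ.1 p - h.1 p| < δ} ∩ {φ | |φ.1 q - h.1 q| < δ} with hU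
        have hUo : IsOpen U := (isOpen_absLt (cpEval p) _ _).inter (isOpen_absLt (cpEval q) _ _)
        have hhU : h ∈ U := by constructor <;> simpa using hδ
        obtain ⟨n, -, hnU⟩ := exists_ge_of_infinite F U (hlim U hUo hhU) 0
        exact ⟨n, hnU.1, hnU.2⟩
  obtain ⟨h, hhy, hhx₀, hB⟩ := hH
  -- endgame
  have hc2gen : ∀ p : X, (∀ m, (F m).1 p = (F m).1 x₀) → h.1 p = h.1 x₀ := by
    intro p hc1
    apply eq_of_forall_dist_le
    intro δ hδ
    rw [Real.dist_eq]
    obtain ⟨n, h1, h2⟩ := hB (δ / 2) (half_pos hδ) p x₀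
    have h3 : |h.1 p - h.1 x₀| ≤ |h.1 p - (F n).1 p| + |(F n).1 p - h.1 x₀| := abs_sub_le _ _ _
    rw [abs_sub_comm, hc1 n] at h1
    rw [hc1 n] at h3
    linarith
  by_cases hTfin : (Set.range y).Finite
  · obtain ⟨p, hp⟩ := exists_infinite_fiber_of_range_finite hTfin
    have hc1 : ∀ m, (F m).1 p = (F m).1 x₀ := by
      intro m
      apply eq_of_forall_dist_le
      intro δ hδ
      rw [Real.dist_eq]
      obtain ⟨N, hN1, hN⟩ := hsmall δ hδ
      obtain ⟨n, hn_mem, hn_gt⟩ := hp.exists_gt (max N m)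
      have h1 := hr3 m n ((le_max_right N m).trans_lt hn_gt)
      rw [hn_mem] at h1
      exact (h1.trans (hN n ((le_max_left N m).trans hn_gt.le))).le
    have hc2 := hc2gen p hc1
    obtain ⟨n₀, hn₀⟩ := hp.nonempty
    have hgp : g p = g x₀ := by
      have := hhy n₀
      rw [hn₀] at this
      rw [← this, hc2, hhx₀]
    have := hεy n₀
    rw [hn₀, hgp, sub_self, abs_zero] at this
    linarith
  · obtain ⟨xs, hxs⟩ := hX _ hTfin
    have hc1 : ∀ m, (F m).1 xs = (F m).1 x₀ := by
      intro m
      apply eq_of_forall_dist_le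
      intro δ hδ
      rw [Real.dist_eq]
      obtain ⟨N, hN1, hN⟩ := hsmall (δ / 2) (half_pos hδ)
      set V : Set X := {x | |(F m).1 x - (F m).1 xs| < δ / 2} with hV
      have hVo : IsOpen V := isOpen_absLt (F m).2 _ _
      have hxsV : xs ∈ V := by simpa [hV] using half_pos hδ
      obtain ⟨n, hnN, hnV⟩ := exists_ge_of_infinite y V (hxs V hVo hxsV) (max N (m + 1))
      have h1 : |(F m).1 (y n) - (F m).1 xs| < δ / 2 := hnV
      have h2 : |(F m).1 (y n) - (F m).1 x₀| < δ / 2 :=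
        (hr3 m n ((Nat.lt_succ_self m).trans_le ((le_max_right N (m+1)).trans hnN))).trans
          (hN n ((le_max_left N (m+1)).trans hnN))
      have h3 : |(F m).1 xs - (F m).1 x₀| ≤
          |(F m).1 xs - (F m).1 (y n)| + |(F m).1 (y n) - (F m).1 x₀| := abs_sub_le _ _ _
      rw [abs_sub_comm] at h1
      linarith
    have hc2 := hc2gen xs hc1
    set V : Set X := {x | |h.1 x - h.1 xs| < ε / 2} with hV
    have hVo : IsOpen V := isOpen_absLt h.2 _ _
    have hxsV : xs ∈ V := by simpa [hV] using half_pos hε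
    obtain ⟨n, -, hnV⟩ := exists_ge_of_infinite y V (hxs V hVo hxsV) 0
    have h1 : |h.1 (y n) - h.1 xs| < ε / 2 := hnV
    have h2 := hεy n
    rw [← hhy n, ← hhx₀, ← hc2] at h2
    linarith

/-- Grothendieck's Theorem: For a countably compact space `X`, a subset of
`Cp(X)` has compact closure iff it is countably compact in `Cp(X)`. -/
theorem grothendieck_theorem
    {X : Type*} [TopologicalSpace X] [CompletelyRegularSpace X] [T2Space X]
    (hX : CountablyCompactSpace' X) (A : Set (Cp X)) :
    IsCompact (closure A) ↔ CountablyCompactIn A (Set.univ : Set (Cp X)) := by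
  constructor
  · intro hcl S hSA hSinf
    set u : ℕ → Cp X := fun n => ((Set.Infinite.natEmbedding S hSinf) n : Cp X) with hu
    have huS : ∀ n, u n ∈ S := fun n => ((Set.Infinite.natEmbedding S hSinf) n).2
    have huinj : Function.Injective u :=
      Subtype.coe_injective.comp (Set.Infinite.natEmbedding S hSinf).injective
    haveI : (Filter.map u Filter.atTop).NeBot := Filter.map_neBot
    have hle : Filter.map u Filter.atTop ≤ 𝓟 (closure A) :=
      Filter.le_principal_iff.2
        (Filter.mem_map.2 (Filter.univ_mem' fun n => subset_closure (hSA (huS n))))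
    obtain ⟨x, -, hx⟩ := hcl.exists_clusterPt hle
    refine ⟨x, Set.mem_univ x, fun U hUo hxU => ?_⟩
    have hinf : {n | u n ∈ U}.Infinite := by
      apply Set.infinite_of_forall_exists_gt
      intro N
      have hV : u '' Set.Ioi N ∈ Filter.map u Filter.atTop :=
        Filter.mem_map.2 (Filter.mem_of_superset (Filter.Ioi_mem_atTop N)
          fun n hn => Set.mem_image_of_mem u hn)
      obtain ⟨φ, hφU, m, hmN, rfl⟩ := clusterPt_iff_nonempty.1 hx (hUo.mem_nhds hxU) hV
      exact ⟨m, hφU, hmN⟩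
    have himg : (u '' {n | u n ∈ U}).Infinite := hinf.image (huinj.injOn)
    refine himg.mono ?_
    rintro _ ⟨n, hn, rfl⟩
    exact ⟨huS n, hn⟩
  · intro hcc
    have hbound : ∀ x : X, ∃ M : ℝ, ∀ f ∈ A, |f.1 x| ≤ M := by
      intro x
      by_contra hcon
      push_neg at hcon
      choose F hFA hFx using fun n : ℕ => hcon (n : ℝ)
      have hSinf : (Set.range F).Infinite := by
        intro hfin
        obtain ⟨B, hB⟩ := (hfin.image fun φ : Cp X => |φ.1 x|).bddAbove
        obtain ⟨n, hn⟩ := exists_nat_gt B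
        have h1 : |(F n).1 x| ≤ B := hB (Set.mem_image_of_mem _ (Set.mem_range_self n))
        have h2 := hFx n
        linarith
      have hSA : Set.range F ⊆ A := by rintro _ ⟨n, rfl⟩; exact hFA n
      obtain ⟨h, -, hlim⟩ := hcc _ hSA hSinf
      set U : Set (Cp X) := {φ | |φ.1 x - h.1 x| < 1} with hU
      have hUo : IsOpen U := isOpen_absLt (cpEval x) _ _
      have hhU : h ∈ U := by simpa [hU] using one_pos
      obtain ⟨N, hN⟩ := exists_nat_gt (|h.1 x| + 1)
      obtain ⟨n, hnN, hnU⟩ := exists_ge_of_infinite F U (hlim U hUo hhU) N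
      have h1 : |(F n).1 x| ≤ |(F n).1 x - h.1 x| + |h.1 x| := by
        calc |(F n).1 x| = |((F n).1 x - h.1 x) + h.1 x| := by ring_nf
          _ ≤ _ := abs_add_le _ _
      have h2 := hFx n
      have h3 : (N : ℝ) ≤ n := by exact_mod_cast hnN
      have h4 : |(F n).1 x - h.1 x| < 1 := hnU
      linarith
    choose M hM using hbound
    set K : Set (X → ℝ) := Set.pi Set.univ fun x => Set.Icc (-(M x)) (M x) with hK
    have hKc : IsCompact K := isCompact_univ_pi fun x => isCompact_Icc
    have hAK : Subtype.val '' A ⊆ K := by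
      rintro _ ⟨f, hfA, rfl⟩ x -
      exact Set.mem_Icc.2 (abs_le.1 (hM x f hfA))
    have hCc : IsCompact (closure (Subtype.val '' A)) :=
      hKc.of_isClosed_subset isClosed_closure (closure_minimal hAK hKc.isClosed)
    have hset : closure A = Subtype.val ⁻¹' closure (Subtype.val '' A) :=
      Set.ext fun f => closure_subtype
    have hsub : closure (Subtype.val '' A) ⊆ Set.range (Subtype.val : Cp X → X → ℝ) :=
      fun φ hφ => ⟨⟨φ, continuous_of_mem_closure hX hcc hφ⟩, rfl⟩
    rw [hset]
    have hemb := (Topology.IsEmbedding.subtypeVal (p := fun f : X → ℝ => Continuous f)).isCompact_iff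
      (s := Subtype.val ⁻¹' closure (Subtype.val '' A))
    rw [Set.image_preimage_eq_of_subset hsub] at hemb
    exact hemb.2 hCc
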